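/- Let 0 < β < 1 and let t ≥ max{β^{−2}, 2}. Then for every integer l ≥ 1 and every integer r with 1 ≤ r ≤ l + 1: I(t,l,r) ≤ e^{β² t} · β^{2(r−3)} · t^{l+r−2}/(l+r−2)!. (The key simplex-integral estimate (B.2) in the proof of Lemma 4.3.) -/

import Mathlib

open scoped BigOperators
open MeasureTheory

noncomputable section

/-- The open simplex `Δ(t,l) = {(t_1,…,t_l) ∈ (0,∞)^l : t_1 + ⋯ + t_l < t}`. -/
def simplexSet (t : ℝ) (l : ℕ) : Set (Fin l → ℝ) :=
  {x | (∀ j, 0 < x j) ∧ ∑ j, x j < t}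

lemma isOpen_simplexSet (t : ℝ) (l : ℕ) : IsOpen (simplexSet t l) := by
  have h1 : IsOpen (⋂ j, {x : Fin l → ℝ | 0 < x j}) :=
    isOpen_iInter_of_finite fun j => isOpen_lt continuous_const (continuous_apply j)
  have h2 : IsOpen {x : Fin l → ℝ | ∑ j, x j < t} :=
    isOpen_lt (continuous_finset_sum _ fun j _ => continuous_apply j) continuous_const
  have : simplexSet t l = (⋂ j, {x : Fin l → ℝ | 0 < x j}) ∩ {x | ∑ j, x j < t} := by
    ext x; simp [simplexSet, Set.mem_iInter]
  rw [this]; exact h1.inter h2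

lemma measurableSet_simplexSet (t : ℝ) (l : ℕ) : MeasurableSet (simplexSet t l) :=
  (isOpen_simplexSet t l).measurableSet

lemma measurable_consFun (l : ℕ) :
    Measurable (fun p : ℝ × (Fin l → ℝ) => (Fin.cons p.1 p.2 : Fin (l+1) → ℝ)) := by
  refine measurable_pi_iff.mpr fun j => ?_
  refine Fin.cases ?_ ?_ j
  · simpa using measurable_fst
  · intro i; simp only [Fin.cons_succ]; exact (measurable_pi_apply i).comp measurable_snd

lemma simplex_decomp (t : ℝ) (l : ℕ) (F : (Fin (l+1) → ℝ) → ENNReal) (hF : Measurable F) :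
    ∫⁻ x in simplexSet t (l+1), F x
      = ∫⁻ s in Set.Ioo 0 t, ∫⁻ y in simplexSet (t-s) l, F (Fin.cons s y) := by
  classical
  set e := MeasurableEquiv.piFinSuccAbove (fun _ : Fin (l+1) => ℝ) 0 with he_def
  have he : MeasurePreserving e volume volume := volume_preserving_piFinSuccAbove _ 0
  have hsymm : ∀ p : ℝ × (Fin l → ℝ), e.symm p = Fin.cons p.1 p.2 := by
    intro p
    rw [he_def, MeasurableEquiv.piFinSuccAbove_symm_apply]
    ext j
    refine Fin.cases ?_ ?_ j
    · simp
    · intro i; simp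
  set T : Set (ℝ × (Fin l → ℝ)) :=
    {p | p.1 ∈ Set.Ioo 0 t ∧ p.2 ∈ simplexSet (t - p.1) l} with hT_def
  have hTmem : ∀ p : ℝ × (Fin l → ℝ),
      p ∈ T ↔ (Fin.cons p.1 p.2 : Fin (l+1) → ℝ) ∈ simplexSet t (l+1) := by
    rintro ⟨s, y⟩
    simp only [hT_def, Set.mem_setOf_eq, Set.mem_Ioo, simplexSet, Fin.sum_cons,
      Fin.forall_fin_succ, Fin.cons_zero, Fin.cons_succ]
    constructor
    · rintro ⟨⟨h0, h1⟩, h2, h3⟩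
      exact ⟨⟨h0, h2⟩, by linarith⟩
    · rintro ⟨⟨h0, h2⟩, h3⟩
      have hy : (0:ℝ) ≤ ∑ j, y j := Finset.sum_nonneg fun j _ => (h2 j).le
      exact ⟨⟨h0, by linarith⟩, h2, by linarith⟩
  have hTmeas : MeasurableSet T := by
    have : T = e.symm ⁻¹' (simplexSet t (l+1)) := by
      ext p; rw [Set.mem_preimage, hsymm p]; exact hTmem p
    rw [this]
    exact e.symm.measurable (measurableSet_simplexSet t (l+1))
  set G : ℝ × (Fin l → ℝ) → ENNReal := fun p => F (Fin.cons p.1 p.2) with hG_def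
  have hGmeas : Measurable G := hF.comp (measurable_consFun l)
  have hcomp : ∫⁻ x, T.indicator G (e x) ∂volume
      = ∫⁻ p, T.indicator G p ∂(volume : Measure (ℝ × (Fin l → ℝ))) :=
    he.lintegral_comp (hGmeas.indicator hTmeas)
  have hprod : ∫⁻ p, T.indicator G p ∂(volume : Measure (ℝ × (Fin l → ℝ)))
      = ∫⁻ s, ∫⁻ y, T.indicator G (s, y) :=
    lintegral_prod _ (hGmeas.indicator hTmeas).aemeasurable
  have key : ∫⁻ x in simplexSet t (l+1), F x
      = ∫⁻ x, T.indicator G (e x) ∂volume := by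
    rw [← lintegral_indicator (measurableSet_simplexSet t (l+1)) F]
    refine lintegral_congr fun x => ?_
    have hx : (Fin.cons (e x).1 (e x).2 : Fin (l+1) → ℝ) = x := by
      rw [← hsymm]; exact e.symm_apply_apply x
    by_cases hmem : x ∈ simplexSet t (l+1)
    · rw [Set.indicator_of_mem hmem,
        Set.indicator_of_mem (by rw [hTmem, hx]; exact hmem), hG_def]
      simp only []
      rw [hx]
    · rw [Set.indicator_of_notMem hmem,
        Set.indicator_of_notMem (by rw [hTmem, hx]; exact hmem)]
  rw [key, hcomp, hprod, ← lintegral_indicator measurableSet_Ioo]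
  refine lintegral_congr fun s => ?_
  by_cases hs : s ∈ Set.Ioo 0 t
  · rw [Set.indicator_of_mem hs,
      ← lintegral_indicator (measurableSet_simplexSet (t-s) l)]
    refine lintegral_congr fun y => ?_
    by_cases hy : y ∈ simplexSet (t-s) l
    · rw [Set.indicator_of_mem (show (s,y) ∈ T from ⟨hs, hy⟩),
        Set.indicator_of_mem hy]
    · rw [Set.indicator_of_notMem (fun h => hy h.2),
        Set.indicator_of_notMem hy]
  · rw [Set.indicator_of_notMem hs]
    have hz : ∀ y : Fin l → ℝ, T.indicator G (s, y) = 0 :=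
      fun y => Set.indicator_of_notMem (fun h => hs h.1) _
    simp only [hz]
    exact lintegral_zero
section Aux
variable {t : ℝ}

lemma intOn_Ioo {f : ℝ → ℝ} (hf : Continuous f) (a b : ℝ) :
    IntegrableOn f (Set.Ioo a b) volume :=
  (hf.integrableOn_Icc).mono_set Set.Ioo_subset_Icc_self

lemma setInt_Ioo_eq {f : ℝ → ℝ} {a b : ℝ} (h : a ≤ b) :
    ∫ x in Set.Ioo a b, f x = ∫ x in a..b, f x := by
  rw [intervalIntegral.integral_of_le h, integral_Ioc_eq_integral_Ioo]

lemma realA (ht : 0 ≤ t) (m : ℕ) :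
    ∫ s in Set.Ioo 0 t, (t - s) ^ m = t ^ (m+1) / (m+1) := by
  rw [setInt_Ioo_eq ht]
  have h := intervalIntegral.integral_comp_sub_left (a := 0) (b := t) (fun u => u ^ m) t
  simp only [sub_self, sub_zero] at h
  rw [h, integral_pow]
  simp

lemma realB (ht : 0 ≤ t) (m : ℕ) :
    ∫ s in Set.Ioo 0 t, s * (t - s) ^ m = t ^ (m+2) / ((m+1) * (m+2)) := by
  rw [setInt_Ioo_eq ht]
  have h := intervalIntegral.integral_comp_sub_left (a := 0) (b := t)
    (fun u => (t - u) * u ^ m) t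
  simp only [sub_self, sub_zero, sub_sub_cancel] at h
  rw [h]
  have h2 : ∫ u in (0:ℝ)..t, (t - u) * u ^ m
      = ∫ u in (0:ℝ)..t, (t * u ^ m - u ^ (m+1)) := by
    congr 1; ext u; ring
  rw [h2, intervalIntegral.integral_sub (f := fun u => t * u ^ m) (g := fun u => u ^ (m+1))
      (((continuous_const.mul (continuous_pow m)).intervalIntegrable _ _))
      ((continuous_pow (m+1)).intervalIntegrable _ _),
    intervalIntegral.integral_const_mul, integral_pow, integral_pow]
  have hm1 : ((m:ℝ) + 1) ≠ 0 := by positivity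
  have hm2 : ((m:ℝ) + 1 + 1) ≠ 0 := by positivity
  field_simp
  push_cast
  ring

lemma lintA (ht : 0 < t) (m : ℕ) :
    ∫⁻ s in Set.Ioo 0 t, ENNReal.ofReal ((t - s) ^ m / m.factorial)
      = ENNReal.ofReal (t ^ (m+1) / (m+1).factorial) := by
  rw [← ofReal_integral_eq_lintegral_ofReal
      (intOn_Ioo (by continuity) 0 t)
      (((ae_restrict_iff' measurableSet_Ioo).mpr (ae_of_all _ fun s hs => by
        have : (0:ℝ) ≤ t - s := by linarith [hs.2]
        positivity)))]
  rw [MeasureTheory.integral_div, realA ht.le m]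
  congr 1
  rw [Nat.factorial_succ]
  push_cast
  field_simp

lemma lintB (ht : 0 < t) (m : ℕ) :
    ∫⁻ s in Set.Ioo 0 t, ENNReal.ofReal s * ENNReal.ofReal ((t - s) ^ m / m.factorial)
      = ENNReal.ofReal (t ^ (m+2) / (m+2).factorial) := by
  have hcong : ∫⁻ s in Set.Ioo 0 t, ENNReal.ofReal s * ENNReal.ofReal ((t - s) ^ m / m.factorial)
      = ∫⁻ s in Set.Ioo 0 t, ENNReal.ofReal (s * ((t - s) ^ m / m.factorial)) := by
    refine setLIntegral_congr_fun measurableSet_Ioo (fun s hs => ?_)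
    rw [ENNReal.ofReal_mul hs.1.le]
  rw [hcong, ← ofReal_integral_eq_lintegral_ofReal
      (intOn_Ioo (by continuity) 0 t)
      (((ae_restrict_iff' measurableSet_Ioo).mpr (ae_of_all _ fun s hs => by
        have h1 : (0:ℝ) ≤ s := hs.1.le
        have h2 : (0:ℝ) ≤ t - s := by linarith [hs.2]
        positivity)))]
  have : ∫ s in Set.Ioo 0 t, s * ((t - s) ^ m / m.factorial)
      = (∫ s in Set.Ioo 0 t, s * (t - s) ^ m) / m.factorial := by
    rw [← MeasureTheory.integral_div]
    congr 1; ext s; ring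
  rw [this, realB ht.le m]
  congr 1
  have e1 : (m+2).factorial = (m+2) * ((m+1) * m.factorial) := by
    rw [Nat.factorial_succ, Nat.factorial_succ]
  rw [e1]
  push_cast
  have hm : (0:ℝ) < m.factorial := by positivity
  field_simp

lemma lintExp {a : ℝ} (ha : 0 < a) (ht : 0 ≤ t) :
    ∫⁻ s in Set.Ioo 0 t, ENNReal.ofReal (Real.exp (a * s))
      = ENNReal.ofReal ((Real.exp (a * t) - 1) / a) := by
  rw [← ofReal_integral_eq_lintegral_ofReal
      (intOn_Ioo (by continuity) 0 t)
      (ae_of_all _ fun s => (Real.exp_pos _).le)]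
  congr 1
  rw [setInt_Ioo_eq ht, intervalIntegral.integral_comp_mul_left (fun u => Real.exp u) ha.ne',
    mul_zero, integral_exp, Real.exp_zero, smul_eq_mul]
  field_simp
end Aux

lemma meas_wprod (l k : ℕ) :
    Measurable fun x : Fin l → ℝ =>
      ∏ j : Fin l, (if (j:ℕ) < k then ENNReal.ofReal (x j) else 1) := by
  refine Finset.measurable_prod _ fun j _ => ?_
  by_cases h : (j:ℕ) < k
  · simp only [h, if_true]
    exact (measurable_pi_apply j).ennreal_ofReal
  · simp only [h, if_false]
    exact measurable_const

lemma keyMoment : ∀ (l k : ℕ) (t : ℝ), k ≤ l → 0 < t →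
    ∫⁻ x in simplexSet t l, ∏ j : Fin l, (if (j:ℕ) < k then ENNReal.ofReal (x j) else 1)
      = ENNReal.ofReal (t ^ (l+k) / (l+k).factorial) := by
  intro l
  induction l with
  | zero =>
    intro k t hk ht
    interval_cases k
    have huniv : simplexSet t 0 = Set.univ := by
      ext x
      simp [simplexSet, ht]
    simp only [Finset.univ_eq_empty, Finset.prod_empty]
    rw [MeasureTheory.setLIntegral_one, huniv]
    rw [MeasureTheory.volume_pi]
    simp [MeasureTheory.Measure.pi_univ]
  | succ l ih =>
    intro k t hk ht
    rw [simplex_decomp t l _ (meas_wprod (l+1) k)]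
    have hsplit : ∀ (s : ℝ) (y : Fin l → ℝ),
        (∏ j : Fin (l+1), if (j:ℕ) < k then ENNReal.ofReal ((Fin.cons s y : Fin (l+1) → ℝ) j) else 1)
        = (if 0 < k then ENNReal.ofReal s else 1) *
          ∏ j : Fin l, (if (j:ℕ) < k - 1 then ENNReal.ofReal (y j) else 1) := by
      intro s y
      rw [Fin.prod_univ_succ]
      simp only [Fin.cons_zero, Fin.cons_succ, Fin.val_zero, Fin.val_succ]
      congr 1
      refine Finset.prod_congr rfl fun j _ => ?_
      by_cases h : (j:ℕ) + 1 < k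
      · rw [if_pos h, if_pos (by omega)]
      · rw [if_neg h, if_neg (by omega)]
    have hinner : ∀ s ∈ Set.Ioo (0:ℝ) t,
        ∫⁻ y in simplexSet (t - s) l,
          (∏ j : Fin (l+1), if (j:ℕ) < k then ENNReal.ofReal ((Fin.cons s y : Fin (l+1) → ℝ) j) else 1)
        = (if 0 < k then ENNReal.ofReal s else 1) *
            ENNReal.ofReal ((t - s) ^ (l + (k-1)) / (l + (k-1)).factorial) := by
      intro s hs
      have hts : 0 < t - s := by linarith [hs.2]
      calc ∫⁻ y in simplexSet (t - s) l,
            (∏ j : Fin (l+1), if (j:ℕ) < k then ENNReal.ofReal ((Fin.cons s y : Fin (l+1) → ℝ) j) else 1)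
          = ∫⁻ y in simplexSet (t - s) l,
            (if 0 < k then ENNReal.ofReal s else 1) *
              ∏ j : Fin l, (if (j:ℕ) < k - 1 then ENNReal.ofReal (y j) else 1) := by
            exact setLIntegral_congr_fun (measurableSet_simplexSet _ _)
              (fun y _ => hsplit s y)
        _ = (if 0 < k then ENNReal.ofReal s else 1) *
              ∫⁻ y in simplexSet (t - s) l,
                ∏ j : Fin l, (if (j:ℕ) < k - 1 then ENNReal.ofReal (y j) else 1) :=
            lintegral_const_mul _ (meas_wprod l (k-1))
        _ = (if 0 < k then ENNReal.ofReal s else 1) *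
              ENNReal.ofReal ((t - s) ^ (l + (k-1)) / (l + (k-1)).factorial) := by
            rw [ih (k-1) (t - s) (by omega) hts]
    rw [setLIntegral_congr_fun measurableSet_Ioo hinner]
    rcases Nat.eq_zero_or_pos k with hk0 | hkpos
    · subst hk0
      simp only [lt_self_iff_false, if_false, one_mul]
      rw [lintA ht (l + 0)]
    · simp only [if_pos hkpos]
      have he : l + 1 + k = (l + (k-1)) + 2 := by omega
      rw [he, lintB ht (l + (k-1))]

lemma vol_simplex (l : ℕ) {t : ℝ} (ht : 0 < t) :
    volume (simplexSet t l) = ENNReal.ofReal (t ^ l / l.factorial) := by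
  have h := keyMoment l 0 t (Nat.zero_le l) ht
  simp only [Nat.not_lt_zero, if_false, Finset.prod_const_one] at h
  rw [← MeasureTheory.setLIntegral_one]
  simpa using h

lemma expBound (l : ℕ) {a t : ℝ} (ha : 0 < a) (ht : 0 < t) :
    ∫⁻ x in simplexSet t (l+1), ENNReal.ofReal (Real.exp (a * x 0))
      ≤ ENNReal.ofReal (Real.exp (a * t) / a * (t ^ l / l.factorial)) := by
  have hmeas : Measurable fun x : Fin (l+1) → ℝ => ENNReal.ofReal (Real.exp (a * x 0)) :=
    (Real.measurable_exp.comp (measurable_const.mul (measurable_pi_apply (0 : Fin (l+1))))).ennreal_ofReal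
  rw [simplex_decomp t l _ hmeas]
  have hstep : ∀ s ∈ Set.Ioo (0:ℝ) t,
      ∫⁻ y in simplexSet (t - s) l,
          ENNReal.ofReal (Real.exp (a * (Fin.cons s y : Fin (l+1) → ℝ) 0))
        = ENNReal.ofReal (Real.exp (a * s)) * ENNReal.ofReal ((t-s) ^ l / l.factorial) := by
    intro s hs
    have hts : 0 < t - s := by linarith [hs.2]
    simp only [Fin.cons_zero]
    rw [MeasureTheory.setLIntegral_const, vol_simplex l hts]
  rw [setLIntegral_congr_fun measurableSet_Ioo hstep]
  have hconst : Measurable fun s : ℝ => ENNReal.ofReal (Real.exp (a * s)) :=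
    (Real.measurable_exp.comp (measurable_id.const_mul a)).ennreal_ofReal
  calc ∫⁻ s in Set.Ioo (0:ℝ) t,
        ENNReal.ofReal (Real.exp (a * s)) * ENNReal.ofReal ((t-s) ^ l / l.factorial)
      ≤ ∫⁻ s in Set.Ioo (0:ℝ) t,
        ENNReal.ofReal (Real.exp (a * s)) * ENNReal.ofReal (t ^ l / l.factorial) := by
        refine lintegral_mono_ae ((ae_restrict_iff' measurableSet_Ioo).mpr
          (ae_of_all _ fun s hs => ?_))
        refine mul_le_mul_right (ENNReal.ofReal_le_ofReal ?_) _
        have h2 : (0:ℝ) < l.factorial := by positivity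
        have h1 : (t - s) ^ l ≤ t ^ l :=
          pow_le_pow_left₀ (by linarith [hs.2]) (by linarith [hs.1]) l
        gcongr
    _ = (∫⁻ s in Set.Ioo (0:ℝ) t, ENNReal.ofReal (Real.exp (a * s)))
          * ENNReal.ofReal (t ^ l / l.factorial) := lintegral_mul_const _ hconst
    _ = ENNReal.ofReal ((Real.exp (a * t) - 1) / a) * ENNReal.ofReal (t ^ l / l.factorial) := by
        rw [lintExp ha ht.le]
    _ ≤ ENNReal.ofReal (Real.exp (a * t) / a) * ENNReal.ofReal (t ^ l / l.factorial) := by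
        refine mul_le_mul_left (ENNReal.ofReal_le_ofReal ?_) _
        have : Real.exp (a * t) - 1 ≤ Real.exp (a * t) := by linarith
        gcongr
    _ = ENNReal.ofReal (Real.exp (a * t) / a * (t ^ l / l.factorial)) := by
        rw [ENNReal.ofReal_mul (by positivity)]

/-- Extended coordinates: `t_0 := 0`, `t_j := x_{j-1}` for `1 ≤ j ≤ l`, and
`t_{l+1} := t - (t_1 + ⋯ + t_l)`. -/
def coordExt (t : ℝ) (l : ℕ) (x : Fin l → ℝ) (j : ℕ) : ℝ :=
  if hj : 1 ≤ j ∧ j ≤ l then x ⟨j - 1, by omega⟩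
  else if j = 0 then 0 else t - ∑ i, x i

lemma coordExt_eq {l : ℕ} (t : ℝ) (x : Fin l → ℝ) {j : ℕ} (i : Fin l)
    (h1 : 1 ≤ j) (h2 : j - 1 = (i:ℕ)) : coordExt t l x j = x i := by
  rw [coordExt, dif_pos ⟨h1, by omega⟩]
  congr 1
  exact Fin.ext h2

lemma coordExt_zero {l : ℕ} (t : ℝ) (x : Fin l → ℝ) : coordExt t l x 0 = 0 := by
  rw [coordExt, dif_neg (by omega), if_pos rfl]

lemma coordExt_top {l : ℕ} (t : ℝ) (x : Fin l → ℝ) :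
    coordExt t l x (l+1) = t - ∑ i, x i := by
  rw [coordExt, dif_neg (by omega), if_neg (by omega)]

lemma prod_shift {l m : ℕ} (hm : m ≤ l) (t : ℝ) (x : Fin l → ℝ) :
    ∏ j ∈ Finset.Icc 1 m, coordExt t l x j
      = ∏ j : Fin l, (if (j:ℕ) < m then x j else 1) := by
  classical
  set f : ℕ → ℝ := fun i => if h : i < l then (if i < m then x ⟨i, h⟩ else 1) else 1 with hf
  have step1 : ∏ j ∈ Finset.Icc 1 m, coordExt t l x j = ∏ j ∈ Finset.range m, f j := by
    rw [← Finset.Ico_add_one_right_eq_Icc, Finset.prod_Ico_eq_prod_range]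
    refine Finset.prod_congr rfl fun j hj => ?_
    have hj' : j < m := Finset.mem_range.mp hj
    have hjl : j < l := by omega
    rw [coordExt_eq t x ⟨j, hjl⟩ (by omega) (by simp), hf]
    simp only [hjl, dif_pos, hj', if_pos]
  have step2 : ∏ j ∈ Finset.range m, f j = ∏ j ∈ Finset.range l, f j := by
    refine Finset.prod_subset (Finset.range_subset_range.mpr hm) fun i _ hi => ?_
    have him : ¬ i < m := fun h => hi (Finset.mem_range.mpr h)
    rw [hf]
    by_cases h : i < l
    · simp [h, him]
    · simp [h]
  have step3 : ∏ j ∈ Finset.range l, f j = ∏ j : Fin l, (if (j:ℕ) < m then x j else 1) := by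
    rw [← Fin.prod_univ_eq_prod_range f l]
    refine Finset.prod_congr rfl fun i _ => ?_
    rw [hf]
    simp only [i.isLt, dif_pos]
  rw [step1, step2, step3]

lemma sum_shift {l m : ℕ} (hm : m ≤ l) (t : ℝ) {x : Fin l → ℝ} (hx : ∀ j, 0 ≤ x j) :
    ∑ j ∈ Finset.Icc 1 m, coordExt t l x j ≤ ∑ j, x j := by
  classical
  set f : ℕ → ℝ := fun i => if h : i < l then x ⟨i, h⟩ else 0 with hf
  have step1 : ∑ j ∈ Finset.Icc 1 m, coordExt t l x j = ∑ j ∈ Finset.range m, f j := by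
    rw [← Finset.Ico_add_one_right_eq_Icc, Finset.sum_Ico_eq_sum_range]
    refine Finset.sum_congr rfl fun j hj => ?_
    have hj' : j < m := Finset.mem_range.mp hj
    have hjl : j < l := by omega
    rw [coordExt_eq t x ⟨j, hjl⟩ (by omega) (by simp), hf]
    simp only [hjl, dif_pos]
  have step2 : ∑ j ∈ Finset.range m, f j ≤ ∑ j ∈ Finset.range l, f j := by
    refine Finset.sum_le_sum_of_subset_of_nonneg (Finset.range_subset_range.mpr hm)
      fun i _ _ => ?_
    rw [hf]
    by_cases h : i < l
    · simp only [h, dif_pos]; exact hx _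
    · simp [h]
  have step3 : ∑ j ∈ Finset.range l, f j = ∑ j, x j := by
    rw [← Fin.sum_univ_eq_sum_range f l]
    refine Finset.sum_congr rfl fun i _ => ?_
    rw [hf]
    simp only [i.isLt, dif_pos]
  calc ∑ j ∈ Finset.Icc 1 m, coordExt t l x j = ∑ j ∈ Finset.range m, f j := step1
    _ ≤ ∑ j ∈ Finset.range l, f j := step2
    _ = ∑ j, x j := step3

lemma exp_sub_one_le' (z : ℝ) : Real.exp z - 1 ≤ z * Real.exp z := by
  have h := Real.add_one_le_exp (-z)
  rw [Real.exp_neg] at h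
  have h3 : 0 < Real.exp z := Real.exp_pos z
  nlinarith [inv_mul_cancel₀ (ne_of_gt h3), mul_le_mul_of_nonneg_right h h3.le]

lemma pointwise_bound {β t : ℝ} (hβ : 0 < β) {l k : ℕ} (hk : k + 1 ≤ l)
    {x : Fin l → ℝ} (hx : x ∈ simplexSet t l) :
    (∏ j ∈ Finset.Icc 1 k, (Real.exp (β^2 * coordExt t l x j) - 1)) *
      Real.exp (β^2 * (coordExt t l x (k+1) + coordExt t l x (k+2)))
    ≤ Real.exp (β^2 * t) * β^(2*k) * ∏ j : Fin l, (if (j:ℕ) < k then x j else 1) := by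
  obtain ⟨hxpos, hxsum⟩ := hx
  have hxnn : ∀ j, 0 ≤ x j := fun j => (hxpos j).le
  have hcnn : ∀ j ∈ Finset.Icc 1 k, 0 ≤ coordExt t l x j := by
    intro j hj
    obtain ⟨h1, h2⟩ := Finset.mem_Icc.mp hj
    rw [coordExt_eq t x ⟨j-1, by omega⟩ h1 (by simp)]
    exact hxnn _
  have hA : (∏ j ∈ Finset.Icc 1 k, (Real.exp (β^2 * coordExt t l x j) - 1))
      ≤ ∏ j ∈ Finset.Icc 1 k,
          (β^2 * coordExt t l x j * Real.exp (β^2 * coordExt t l x j)) := by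
    refine Finset.prod_le_prod (fun j hj => ?_) (fun j hj => exp_sub_one_le' _)
    have h0 : (0:ℝ) ≤ β^2 * coordExt t l x j := mul_nonneg (sq_nonneg β) (hcnn j hj)
    linarith [Real.add_one_le_exp (β^2 * coordExt t l x j)]
  have hB : ∏ j ∈ Finset.Icc 1 k,
        (β^2 * coordExt t l x j * Real.exp (β^2 * coordExt t l x j))
      = β^(2*k) * (∏ j ∈ Finset.Icc 1 k, coordExt t l x j) *
        Real.exp (β^2 * ∑ j ∈ Finset.Icc 1 k, coordExt t l x j) := by
    rw [Finset.prod_mul_distrib, Finset.prod_mul_distrib, Finset.prod_const,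
      Nat.card_Icc, ← Real.exp_sum, ← Finset.mul_sum]
    have : k + 1 - 1 = k := by omega
    rw [this, ← pow_mul]
  have hsum : ∑ j ∈ Finset.Icc 1 k, coordExt t l x j
      + (coordExt t l x (k+1) + coordExt t l x (k+2)) ≤ t := by
    have e1 : ∑ j ∈ Finset.Icc 1 (k+1), coordExt t l x j
        = ∑ j ∈ Finset.Icc 1 k, coordExt t l x j + coordExt t l x (k+1) :=
      Finset.sum_Icc_succ_top (by omega) _
    by_cases hcase : k + 2 ≤ l
    · have e2 : ∑ j ∈ Finset.Icc 1 (k+2), coordExt t l x j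
          = ∑ j ∈ Finset.Icc 1 (k+1), coordExt t l x j + coordExt t l x (k+2) :=
        Finset.sum_Icc_succ_top (by omega) _
      have h4 := sum_shift hcase t hxnn
      rw [e2, e1] at h4
      linarith
    · have hk2 : k + 2 = l + 1 := by omega
      have e3 : coordExt t l x (k+2) = t - ∑ i, x i := by rw [hk2, coordExt_top]
      have h4 := sum_shift (show k + 1 ≤ l by omega) t hxnn
      rw [e1] at h4
      linarith
  have hprod_nn : 0 ≤ ∏ j ∈ Finset.Icc 1 k, coordExt t l x j :=
    Finset.prod_nonneg hcnn
  calc (∏ j ∈ Finset.Icc 1 k, (Real.exp (β^2 * coordExt t l x j) - 1)) *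
        Real.exp (β^2 * (coordExt t l x (k+1) + coordExt t l x (k+2)))
      ≤ (∏ j ∈ Finset.Icc 1 k,
          (β^2 * coordExt t l x j * Real.exp (β^2 * coordExt t l x j))) *
        Real.exp (β^2 * (coordExt t l x (k+1) + coordExt t l x (k+2))) :=
        mul_le_mul_of_nonneg_right hA (Real.exp_pos _).le
    _ = β^(2*k) * (∏ j ∈ Finset.Icc 1 k, coordExt t l x j) *
        Real.exp (β^2 * (∑ j ∈ Finset.Icc 1 k, coordExt t l x j
          + (coordExt t l x (k+1) + coordExt t l x (k+2)))) := by
        rw [hB, mul_assoc, ← Real.exp_add, ← mul_add, mul_assoc]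
    _ ≤ β^(2*k) * (∏ j ∈ Finset.Icc 1 k, coordExt t l x j) * Real.exp (β^2 * t) := by
        refine mul_le_mul_of_nonneg_left (Real.exp_le_exp.mpr ?_)
          (mul_nonneg (pow_nonneg hβ.le _) hprod_nn)
        exact mul_le_mul_of_nonneg_left hsum (sq_nonneg β)
    _ = Real.exp (β^2 * t) * β^(2*k) * ∏ j : Fin l, (if (j:ℕ) < k then x j else 1) := by
        rw [prod_shift (show k ≤ l by omega) t x]
        ring

lemma integrableOn_prodIte (l k : ℕ) {t : ℝ} (ht : 0 ≤ t) :
    IntegrableOn (fun x : Fin l → ℝ => ∏ j : Fin l, (if (j:ℕ) < k then x j else 1))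
      (simplexSet t l) volume := by
  have hcont : Continuous fun x : Fin l → ℝ =>
      ∏ j : Fin l, (if (j:ℕ) < k then x j else 1) := by
    refine continuous_finset_prod _ fun j _ => ?_
    by_cases h : (j:ℕ) < k
    · simpa [h] using continuous_apply j
    · simpa [h] using continuous_const
  have hsub : simplexSet t l ⊆ Set.Icc (fun _ => 0) (fun _ => t) := by
    intro x hx
    constructor
    · intro j; exact (hx.1 j).le
    · intro j
      have h1 := Finset.single_le_sum (f := x) (fun i _ => (hx.1 i).le) (Finset.mem_univ j)
      have h2 := hx.2
      exact le_of_lt (lt_of_le_of_lt h1 h2)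
  exact (hcont.integrableOn_Icc).mono_set hsub

lemma setIntegral_prodIte {l k : ℕ} (hk : k ≤ l) {t : ℝ} (ht : 0 < t) :
    ∫ x in simplexSet t l, ∏ j : Fin l, (if (j:ℕ) < k then x j else 1)
      = t ^ (l+k) / (l+k).factorial := by
  have hnn : 0 ≤ᵐ[volume.restrict (simplexSet t l)]
      fun x : Fin l → ℝ => ∏ j : Fin l, (if (j:ℕ) < k then x j else 1) := by
    refine (ae_restrict_iff' (measurableSet_simplexSet t l)).mpr (ae_of_all _ fun x hx => ?_)
    refine Finset.prod_nonneg fun j _ => ?_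
    by_cases h : (j:ℕ) < k
    · simpa [h] using (hx.1 j).le
    · simp [h]
  have h1 := ofReal_integral_eq_lintegral_ofReal (integrableOn_prodIte l k ht.le) hnn
  have h2 : ∫⁻ x in simplexSet t l,
      ENNReal.ofReal (∏ j : Fin l, (if (j:ℕ) < k then x j else 1))
      = ∫⁻ x in simplexSet t l, ∏ j : Fin l, (if (j:ℕ) < k then ENNReal.ofReal (x j) else 1) := by
    refine setLIntegral_congr_fun (measurableSet_simplexSet t l) (fun x hx => ?_)
    rw [ENNReal.ofReal_prod_of_nonneg (fun j _ => by
      by_cases h : (j:ℕ) < k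
      · simpa [h] using (hx.1 j).le
      · simp [h])]
    refine Finset.prod_congr rfl fun j _ => ?_
    by_cases h : (j:ℕ) < k <;> simp [h]
  rw [h2, keyMoment l k t hk ht] at h1
  refine (ENNReal.ofReal_eq_ofReal_iff ?_ ?_).mp h1
  · exact integral_nonneg_of_ae hnn
  · positivity

/-- The simplex integral
`I(t,l,r) = ∫_{Δ(t,l)} ∏_{j=1}^{r-2} (e^{β² t_j} − 1) · e^{β² (t_{r−1} + t_r)} dt_1 ⋯ dt_l`. -/
def Iint (β t : ℝ) (l r : ℕ) : ℝ :=
  ∫ x in simplexSet t l,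
    (∏ j ∈ Finset.Icc 1 (r - 2), (Real.exp (β ^ 2 * coordExt t l x j) - 1)) *
      Real.exp (β ^ 2 * (coordExt t l x (r - 1) + coordExt t l x r))

/-- The key simplex-integral estimate (B.2): for `0 < β < 1` and `t ≥ max{β⁻², 2}`,
`I(t,l,r) ≤ e^{β² t} β^{2(r−3)} t^{l+r−2}/(l+r−2)!`. -/
theorem stmt8 (β : ℝ) (hβ0 : 0 < β) (hβ1 : β < 1) (t : ℝ)
    (ht : max (β ^ 2)⁻¹ 2 ≤ t) :
    ∀ l r : ℕ, 1 ≤ l → 1 ≤ r → r ≤ l + 1 →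
      Iint β t l r ≤
        Real.exp (β ^ 2 * t) * β ^ (2 * ((r : ℤ) - 3)) *
          t ^ (l + r - 2) / (((l + r - 2).factorial : ℝ)) := by
  intro l r hl hr hrl
  have ht2 : (2:ℝ) ≤ t := le_trans (le_max_right _ _) ht
  have ht0 : (0:ℝ) < t := by linarith
  have hβ2 : β ^ 2 ≤ 1 := by nlinarith
  rcases Nat.lt_or_ge r 2 with hr1 | hr2
  · -- case r = 1
    have hre : r = 1 := by omega
    subst hre
    obtain ⟨l', rfl⟩ : ∃ l', l = l' + 1 := ⟨l - 1, by omega⟩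
    have hfun : ∀ x : Fin (l'+1) → ℝ,
        (∏ j ∈ Finset.Icc 1 (1 - 2), (Real.exp (β ^ 2 * coordExt t (l'+1) x j) - 1)) *
          Real.exp (β ^ 2 * (coordExt t (l'+1) x (1 - 1) + coordExt t (l'+1) x 1))
        = Real.exp (β^2 * x 0) := by
      intro x
      have e0 : coordExt t (l'+1) x 0 = 0 := coordExt_zero t x
      have e1 : coordExt t (l'+1) x 1 = x 0 := coordExt_eq t x 0 le_rfl (by simp)
      show (∏ j ∈ Finset.Icc 1 0, (Real.exp (β ^ 2 * coordExt t (l'+1) x j) - 1)) *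
          Real.exp (β ^ 2 * (coordExt t (l'+1) x 0 + coordExt t (l'+1) x 1)) = _
      rw [show Finset.Icc 1 0 = (∅ : Finset ℕ) from Finset.Icc_eq_empty (by omega),
        Finset.prod_empty, one_mul, e0, e1, zero_add]
    have hIeq : Iint β t (l'+1) 1 = ∫ x in simplexSet t (l'+1), Real.exp (β^2 * x 0) := by
      unfold Iint
      exact setIntegral_congr_fun (measurableSet_simplexSet _ _) fun x _ => hfun x
    rw [hIeq]
    have hmeas_exp : AEStronglyMeasurable (fun x : Fin (l'+1) → ℝ => Real.exp (β^2 * x 0))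
        (volume.restrict (simplexSet t (l'+1))) :=
      (Real.continuous_exp.comp (continuous_const.mul (continuous_apply 0))).aestronglyMeasurable
    rw [integral_eq_lintegral_of_nonneg_ae (ae_of_all _ fun x => (Real.exp_pos _).le) hmeas_exp]
    have hb := expBound l' (show (0:ℝ) < β^2 by positivity) ht0
    have := ENNReal.toReal_mono ENNReal.ofReal_ne_top hb
    rw [ENNReal.toReal_ofReal (by positivity)] at this
    refine le_trans this ?_
    have hee : l' + 1 + 1 - 2 = l' := by omega
    rw [hee]
    have hz : β^(2*(((1:ℕ):ℤ)-3)) = (β^4)⁻¹ := by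
      have h4 : (2*(((1:ℕ):ℤ)-3)) = -4 := by norm_num
      rw [h4]
      rfl
    rw [hz]
    have h42 : β^4 ≤ β^2 := by nlinarith
    have h24 : (β^2)⁻¹ ≤ (β^4)⁻¹ := inv_anti₀ (by positivity) h42
    calc Real.exp (β^2*t)/β^2 * (t^l'/l'.factorial)
        = Real.exp (β^2*t) * (β^2)⁻¹ * t^l' / l'.factorial := by ring
      _ ≤ Real.exp (β^2*t) * (β^4)⁻¹ * t^l' / l'.factorial := by
          have hstep : Real.exp (β^2*t) * (β^2)⁻¹ * t^l'
              ≤ Real.exp (β^2*t) * (β^4)⁻¹ * t^l' :=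
            mul_le_mul_of_nonneg_right
              (mul_le_mul_of_nonneg_left h24 (Real.exp_pos _).le) (by positivity)
          exact div_le_div_of_nonneg_right hstep (by positivity)
  · -- case r ≥ 2
    obtain ⟨k, rfl⟩ : ∃ k, r = k + 2 := ⟨r - 2, by omega⟩
    have hkl : k + 1 ≤ l := by omega
    have hIeq : Iint β t l (k+2) = ∫ x in simplexSet t l,
        (∏ j ∈ Finset.Icc 1 k, (Real.exp (β^2 * coordExt t l x j) - 1)) *
          Real.exp (β^2 * (coordExt t l x (k+1) + coordExt t l x (k+2))) := rfl
    rw [hIeq]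
    set C := Real.exp (β^2*t) * β^(2*k) with hC
    have hf0 : 0 ≤ᵐ[volume.restrict (simplexSet t l)]
        fun x => (∏ j ∈ Finset.Icc 1 k, (Real.exp (β^2 * coordExt t l x j) - 1)) *
          Real.exp (β^2 * (coordExt t l x (k+1) + coordExt t l x (k+2))) := by
      refine (ae_restrict_iff' (measurableSet_simplexSet t l)).mpr (ae_of_all _ fun x hx => ?_)
      refine mul_nonneg (Finset.prod_nonneg fun j hj => ?_) (Real.exp_pos _).le
      obtain ⟨h1, h2⟩ := Finset.mem_Icc.mp hj
      have hc : 0 ≤ coordExt t l x j := by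
        rw [coordExt_eq t x ⟨j-1, by omega⟩ h1 (by simp)]
        exact (hx.1 _).le
      have := Real.one_le_exp (mul_nonneg (sq_nonneg β) hc)
      linarith
    have hgint : Integrable (fun x : Fin l → ℝ =>
        C * ∏ j : Fin l, (if (j:ℕ) < k then x j else 1))
        (volume.restrict (simplexSet t l)) :=
      (integrableOn_prodIte l k ht0.le).const_mul C
    have hfg : (fun x => (∏ j ∈ Finset.Icc 1 k, (Real.exp (β^2 * coordExt t l x j) - 1)) *
          Real.exp (β^2 * (coordExt t l x (k+1) + coordExt t l x (k+2))))
        ≤ᵐ[volume.restrict (simplexSet t l)]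
        fun x => C * ∏ j : Fin l, (if (j:ℕ) < k then x j else 1) := by
      refine (ae_restrict_iff' (measurableSet_simplexSet t l)).mpr (ae_of_all _ fun x hx => ?_)
      simpa using pointwise_bound hβ0 hkl hx
    have hmono := integral_mono_of_nonneg hf0 hgint hfg
    refine le_trans hmono ?_
    rw [integral_const_mul, setIntegral_prodIte (show k ≤ l by omega) ht0]
    have hll : l + (k+2) - 2 = l + k := by omega
    rw [hll]
    have hβk : β^(2*k) ≤ β^(2*(((k+2:ℕ):ℤ)-3)) := by
      have hzz : (2*(((k+2:ℕ):ℤ)-3)) = (2*k:ℕ) - (2:ℕ) := by push_cast; ring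
      rw [hzz, zpow_sub₀ (ne_of_gt hβ0), zpow_natCast, zpow_natCast]
      rw [le_div_iff₀ (by positivity)]
      nlinarith [pow_nonneg hβ0.le (2*k)]
    calc C * (t^(l+k)/(l+k).factorial)
        ≤ Real.exp (β^2*t) * β^(2*(((k+2:ℕ):ℤ)-3)) * (t^(l+k)/(l+k).factorial) := by
          rw [hC]
          exact mul_le_mul_of_nonneg_right
            (mul_le_mul_of_nonneg_left hβk (Real.exp_pos _).le) (by positivity)
      _ = Real.exp (β^2*t) * β^(2*(((k+2:ℕ):ℤ)-3)) * t^(l+k) / (l+k).factorial := by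
          ring
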